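/- Let L : M_n(ℂ) → M_m(ℂ) have the form L(X) = ∑_{r=1}^p C_r X C_r† − ∑_{s=1}^q D_s X D_s† with C_r, D_s ∈ M_{m,n}(ℂ). If L is k-positive, then the k-numerical range of the Hermitian matrix ∑_{r=1}^p C_r† C_r − ∑_{s=1}^q D_s† D_s is contained in [0, ∞); equivalently, the sum of the k smallest eigenvalues of this matrix is nonnegative. -/

import Mathlib

open Matrix ComplexOrder in
/-- if `L(X) = ∑ C_r X C_r† − ∑ D_s X D_s†` is `k`-positive, then
`W_k(∑ C_r† C_r − ∑ D_s† D_s) ⊆ [0, ∞)`. -/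
theorem stmt_4 {n m k p q : ℕ} (hk1 : 1 ≤ k) (hkn : k ≤ n)
    (C : Fin p → Matrix (Fin m) (Fin n) ℂ)
    (D : Fin q → Matrix (Fin m) (Fin n) ℂ)
    (L : Matrix (Fin n) (Fin n) ℂ → Matrix (Fin m) (Fin m) ℂ)
    (hL : ∀ X, L X = (∑ r, C r * X * (C r)ᴴ) - ∑ s, D s * X * (D s)ᴴ)
    (hpos : ∀ A : Matrix (Fin k × Fin n) (Fin k × Fin n) ℂ, A.PosSemidef →
      (Matrix.of fun u v : Fin k × Fin m =>
        L (Matrix.of fun x y => A (u.1, x) (v.1, y)) u.2 v.2).PosSemidef) :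
    ∀ f : Fin k → Fin n → ℂ,
      (∀ i j, star (f i) ⬝ᵥ f j = if i = j then 1 else 0) →
      0 ≤ ∑ j, star (f j) ⬝ᵥ
        ((∑ r, (C r)ᴴ * C r) - ∑ s, (D s)ᴴ * D s).mulVec (f j) := by
  intro f horth
  set A : Matrix (Fin k × Fin n) (Fin k × Fin n) ℂ :=
    Matrix.of fun u v => f u.1 u.2 * star (f v.1 v.2) with hAdef
  have hA : A.PosSemidef := by
    rw [posSemidef_iff_dotProduct_mulVec]
    constructor
    · ext u v
      simp [hAdef, conjTranspose_apply, mul_comm]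
    · intro x
      have : star x ⬝ᵥ A.mulVec x
          = (∑ u, star (x u) * f u.1 u.2) * star (∑ u, star (x u) * f u.1 u.2) := by
        simp only [hAdef, dotProduct, mulVec, of_apply, star_sum, star_mul', star_star, Pi.star_apply]
        rw [Finset.sum_mul]
        refine Finset.sum_congr rfl fun u _ => ?_
        rw [Finset.mul_sum, Finset.mul_sum]
        refine Finset.sum_congr rfl fun v _ => ?_
        ring
      rw [this]
      exact mul_star_self_nonneg _
  have hB := hpos A hA
  set B := (Matrix.of fun u v : Fin k × Fin m =>
        L (Matrix.of fun x y => A (u.1, x) (v.1, y)) u.2 v.2) with hBdef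
  have hdiag : ∀ u, (0:ℂ) ≤ B u u := by
    intro u
    have h := hB.dotProduct_mulVec_nonneg (Pi.single u 1)
    simpa [dotProduct, mulVec, Pi.single_apply, Finset.sum_ite_eq, Finset.sum_ite_eq'] using h
  have l1 : ∀ (M : Matrix (Fin n) (Fin n) ℂ) (g : Fin n → ℂ),
      star g ⬝ᵥ M.mulVec g = (M * Matrix.of fun x y => g x * star (g y)).trace := by
    intro M g
    simp only [trace, diag_apply, Matrix.mul_apply, dotProduct, mulVec, of_apply,
      Pi.star_apply, Finset.mul_sum]
    exact Finset.sum_congr rfl fun x _ => Finset.sum_congr rfl fun y _ => by ring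
  have key : ∑ j, star (f j) ⬝ᵥ
        ((∑ r, (C r)ᴴ * C r) - ∑ s, (D s)ᴴ * D s).mulVec (f j) = ∑ u, B u u := by
    rw [Fintype.sum_prod_type]
    refine Finset.sum_congr rfl fun j _ => ?_
    have hr : ∑ x : Fin m, B (j, x) (j, x)
        = (L (Matrix.of fun x y => f j x * star (f j y))).trace := by
      simp only [hBdef, of_apply, hAdef, trace, diag_apply]
    rw [hr, l1, hL]
    rw [Matrix.sub_mul, Matrix.trace_sub, Matrix.trace_sub, Finset.sum_mul, Finset.sum_mul,
      trace_sum, trace_sum, trace_sum, trace_sum]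
    congr 1 <;> refine Finset.sum_congr rfl fun r _ => ?_ <;>
      rw [Matrix.mul_assoc, Matrix.trace_mul_comm]
  rw [key]
  exact Finset.sum_nonneg fun u _ => hdiag u
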